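/- With f₀(u) := (√(1-u) + √u·arcsin(√u))·√(1-u) − 1 for u ∈ [0,1], the constant κ₀ := (1/π)·( (1/π)·∫₀^∞ f₀(sech²v) dv + 1/2 ) equals (1/π)(1 − 2/π). -/

import Mathlib

open Real MeasureTheory Set Filter

noncomputable def gfun (v : ℝ) : ℝ :=
  (Real.sqrt (1-(1/Real.cosh v)^2) + Real.sqrt ((1/Real.cosh v)^2) *
    Real.arcsin (Real.sqrt ((1/Real.cosh v)^2))) * Real.sqrt (1-(1/Real.cosh v)^2) - 1

lemma cosh_ne (v : ℝ) : Real.cosh v ≠ 0 := (Real.cosh_pos v).ne'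

lemma sqrt_sech_sq (v : ℝ) : Real.sqrt ((1/Real.cosh v)^2) = 1/Real.cosh v := by
  rw [Real.sqrt_sq (by positivity)]

lemma sqrt_one_sub_sech_sq {v : ℝ} (hv : 0 ≤ v) :
    Real.sqrt (1-(1/Real.cosh v)^2) = Real.sinh v / Real.cosh v := by
  have hc := Real.cosh_pos v
  have hs : (0:ℝ) ≤ Real.sinh v := Real.sinh_nonneg_iff.2 hv
  have h1 : 1-(1/Real.cosh v)^2 = (Real.sinh v / Real.cosh v)^2 := by
    have := Real.cosh_sq v
    field_simp
    nlinarith [Real.cosh_sq v]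
  rw [h1, Real.sqrt_sq (by positivity)]

lemma gfun_eq {v : ℝ} (hv : 0 ≤ v) :
    gfun v = -(1/(Real.cosh v)^2)
      + Real.sinh v / (Real.cosh v)^2 * Real.arcsin (1/Real.cosh v) := by
  have hc := Real.cosh_pos v
  unfold gfun
  rw [sqrt_sech_sq, sqrt_one_sub_sech_sq hv]
  have := Real.cosh_sq v
  field_simp
  nlinarith [Real.cosh_sq v]

lemma sech_le (v : ℝ) (hv : 0 ≤ v) : 1/Real.cosh v ≤ 2 * Real.exp (-v) := by
  have h : Real.exp v / 2 ≤ Real.cosh v := by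
    rw [Real.cosh_eq]
    have := (Real.exp_pos (-v)).le
    linarith
  have he := Real.exp_pos v
  rw [div_le_iff₀ (Real.cosh_pos v)]
  have h2 : (1:ℝ) ≤ 2 * Real.exp (-v) * (Real.exp v / 2) := by
    rw [Real.exp_neg]
    field_simp
    exact le_refl _
  calc (1:ℝ) ≤ 2 * Real.exp (-v) * (Real.exp v / 2) := h2
    _ ≤ 2 * Real.exp (-v) * Real.cosh v := by
        apply mul_le_mul_of_nonneg_left h (by positivity)

lemma gfun_bound {v : ℝ} (hv : 0 ≤ v) : ‖gfun v‖ ≤ (2+Real.pi) * Real.exp (-v) := by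
  have hc1 : (1:ℝ) ≤ Real.cosh v := Real.one_le_cosh v
  have hc : (0:ℝ) < Real.cosh v := Real.cosh_pos v
  have hs : (0:ℝ) ≤ Real.sinh v := Real.sinh_nonneg_iff.2 hv
  have hslt : Real.sinh v < Real.cosh v := by
    have : Real.cosh v - Real.sinh v = Real.exp (-v) := Real.cosh_sub_sinh v
    nlinarith [Real.exp_pos (-v)]
  have hA0 : 0 ≤ Real.arcsin (1/Real.cosh v) := Real.arcsin_nonneg.2 (by positivity)
  have hA1 : Real.arcsin (1/Real.cosh v) ≤ Real.pi/2 := Real.arcsin_le_pi_div_two _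
  have hsech := sech_le v hv
  rw [gfun_eq hv, Real.norm_eq_abs]
  have hsech0 : (0:ℝ) ≤ 1/Real.cosh v := by positivity
  have h1 : 1/(Real.cosh v)^2 ≤ 1/Real.cosh v := by
    rw [div_le_div_iff₀ (by positivity) hc]
    nlinarith
  have h2 : Real.sinh v / (Real.cosh v)^2 ≤ 1/Real.cosh v := by
    rw [div_le_div_iff₀ (by positivity) hc]
    nlinarith
  have h3 : 0 ≤ Real.sinh v / (Real.cosh v)^2 := by positivity
  rw [abs_le]
  constructor
  · have : Real.sinh v / (Real.cosh v)^2 * Real.arcsin (1/Real.cosh v) ≥ 0 :=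
      mul_nonneg h3 hA0
    nlinarith [Real.pi_pos, Real.exp_pos (-v)]
  · have hm : Real.sinh v / (Real.cosh v)^2 * Real.arcsin (1/Real.cosh v)
        ≤ (1/Real.cosh v) * (Real.pi/2) := mul_le_mul h2 hA1 hA0 hsech0
    have h4 : (1/Real.cosh v) * (Real.pi/2) ≤ Real.pi * Real.exp (-v) := by
      nlinarith [Real.pi_pos]
    have h5 : (0:ℝ) ≤ 1/(Real.cosh v)^2 := by positivity
    nlinarith [Real.exp_pos (-v)]

lemma gfun_integrable : IntegrableOn gfun (Set.Ioi (0:ℝ)) := by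
  have hg : IntegrableOn (fun v => (2+Real.pi) * Real.exp (-v)) (Set.Ioi (0:ℝ)) := by
    have := (exp_neg_integrableOn_Ioi (0:ℝ) (b := 1) one_pos).const_mul (2+Real.pi)
    simpa [IntegrableOn] using this
  have hcont : Continuous gfun := by
    unfold gfun
    have h1 : Continuous fun v : ℝ => (1/Real.cosh v)^2 :=
      ((continuous_const.div Real.continuous_cosh cosh_ne).pow 2)
    have h2 : Continuous fun v : ℝ => Real.sqrt (1-(1/Real.cosh v)^2) :=
      Real.continuous_sqrt.comp (continuous_const.sub h1)
    have h3 : Continuous fun v : ℝ => Real.sqrt ((1/Real.cosh v)^2) :=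
      Real.continuous_sqrt.comp h1
    exact ((h2.add (h3.mul (Real.continuous_arcsin.comp h3))).mul h2).sub continuous_const
  rw [IntegrableOn] at hg ⊢
  apply hg.mono hcont.aestronglyMeasurable
  filter_upwards [ae_restrict_mem measurableSet_Ioi] with v hv
  have h := gfun_bound (le_of_lt hv)
  simp only [Real.norm_eq_abs] at h ⊢
  rw [abs_of_pos (by positivity : (0:ℝ) < (2+Real.pi) * Real.exp (-v))]
  exact h

noncomputable def Ffun (v : ℝ) : ℝ :=
  -2 * (Real.sinh v / Real.cosh v) - (Real.cosh v)⁻¹ * Real.arcsin ((Real.cosh v)⁻¹)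

lemma Ffun_hasDeriv {v : ℝ} (hv : 0 < v) : HasDerivAt Ffun (gfun v) v := by
  have hc : (0:ℝ) < Real.cosh v := Real.cosh_pos v
  have hs : (0:ℝ) < Real.sinh v := Real.sinh_pos_iff.2 hv
  have hclt : (1:ℝ) < Real.cosh v := by nlinarith [Real.cosh_sq v]
  have hQ : HasDerivAt (fun v => Real.sinh v / Real.cosh v)
      ((Real.cosh v * Real.cosh v - Real.sinh v * Real.sinh v) / (Real.cosh v)^2) v :=
    (Real.hasDerivAt_sinh v).div (Real.hasDerivAt_cosh v) (cosh_ne v)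
  have hS : HasDerivAt (fun v => (Real.cosh v)⁻¹)
      (-Real.sinh v / (Real.cosh v)^2) v := by
    exact (Real.hasDerivAt_cosh v).inv (cosh_ne v)
  have hne1 : (Real.cosh v)⁻¹ ≠ -1 := by
    have : (0:ℝ) < (Real.cosh v)⁻¹ := by positivity
    linarith
  have hne2 : (Real.cosh v)⁻¹ ≠ 1 := by
    have : (Real.cosh v)⁻¹ < 1 := by
      rw [inv_lt_one_iff₀]; right; exact hclt
    linarith
  have hA : HasDerivAt (fun v => Real.arcsin ((Real.cosh v)⁻¹))
      ((1 / Real.sqrt (1 - ((Real.cosh v)⁻¹)^2)) * (-Real.sinh v / (Real.cosh v)^2)) v :=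
    by have := (Real.hasDerivAt_arcsin hne1 hne2).comp v hS; exact this
  have hsqrt : Real.sqrt (1 - ((Real.cosh v)⁻¹)^2) = Real.sinh v / Real.cosh v := by
    have := sqrt_one_sub_sech_sq hv.le
    rw [one_div] at this
    exact this
  rw [hsqrt] at hA
  have hF : HasDerivAt Ffun
      (-2 * ((Real.cosh v * Real.cosh v - Real.sinh v * Real.sinh v) / (Real.cosh v)^2)
        - ((-Real.sinh v / (Real.cosh v)^2) * Real.arcsin ((Real.cosh v)⁻¹)
          + (Real.cosh v)⁻¹ * ((1 / (Real.sinh v / Real.cosh v)) * (-Real.sinh v / (Real.cosh v)^2)))) v :=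
    ((hQ.const_mul (-2)).sub (hS.mul hA))
  convert hF using 1
  rw [gfun_eq hv.le, one_div (Real.cosh v),
    show Real.cosh v * Real.cosh v - Real.sinh v * Real.sinh v = 1 from by
      nlinarith [Real.cosh_sq v]]
  field_simp
  ring

lemma Ffun_tendsto : Tendsto Ffun atTop (nhds (-2)) := by
  have hsech : Tendsto (fun v => (Real.cosh v)⁻¹) atTop (nhds 0) := by
    apply squeeze_zero (fun v => by positivity) (fun v => ?_)
      (by simpa using (Real.tendsto_exp_neg_atTop_nhds_zero.const_mul 2))
    · by_cases hv : 0 ≤ v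
      · have := sech_le v hv
        rw [one_div] at this
        exact this
      · push_neg at hv
        have h1 : (Real.cosh v)⁻¹ ≤ 1 := by
          rw [inv_le_one_iff₀]; right; exact Real.one_le_cosh v
        have : (1:ℝ) ≤ 2 * Real.exp (-v) := by
          have : (1:ℝ) ≤ Real.exp (-v) := Real.one_le_exp (by linarith)
          linarith
        linarith
  have hQ : Tendsto (fun v => Real.sinh v / Real.cosh v) atTop (nhds 1) := by
    have heq : ∀ v : ℝ, Real.sinh v / Real.cosh v = 1 - Real.exp (-v) * (Real.cosh v)⁻¹ := by
      intro v
      have hc := cosh_ne v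
      have h := Real.cosh_sub_sinh v
      field_simp
      linarith
    simp_rw [heq]
    have : Tendsto (fun v => Real.exp (-v) * (Real.cosh v)⁻¹) atTop (nhds 0) := by
      simpa using Real.tendsto_exp_neg_atTop_nhds_zero.mul hsech
    simpa using (tendsto_const_nhds (x := (1:ℝ))).sub this
  have hA : Tendsto (fun v => Real.arcsin ((Real.cosh v)⁻¹)) atTop (nhds 0) := by
    have := (Real.continuous_arcsin.tendsto 0).comp hsech
    simpa [Function.comp_def] using this
  have : Tendsto Ffun atTop (nhds (-2 * 1 - 0 * 0)) :=
    ((hQ.const_mul (-2)).sub (hsech.mul hA))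
  simpa using this

lemma Ffun_cont : Continuous Ffun := by
  unfold Ffun
  have h1 : Continuous fun v : ℝ => (Real.cosh v)⁻¹ :=
    Real.continuous_cosh.inv₀ cosh_ne
  exact ((continuous_const.mul (Real.continuous_sinh.div Real.continuous_cosh cosh_ne)).sub
    (h1.mul (Real.continuous_arcsin.comp h1)))

lemma key_integral : ∫ v in Set.Ioi (0:ℝ), gfun v = Real.pi/2 - 2 := by
  have h := MeasureTheory.integral_Ioi_of_hasDerivAt_of_tendsto
    (f := Ffun) (f' := gfun) (a := 0) (m := -2)
    Ffun_cont.continuousWithinAt (fun x hx => Ffun_hasDeriv hx)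
    gfun_integrable Ffun_tendsto
  rw [h]
  unfold Ffun
  simp [Real.arcsin_one]
  ring

theorem stmt_13
    (f₀ : ℝ → ℝ)
    (hf₀ : ∀ u ∈ Set.Icc (0:ℝ) 1,
      f₀ u = (Real.sqrt (1-u) + Real.sqrt u * Real.arcsin (Real.sqrt u)) * Real.sqrt (1-u) - 1) :
    (1/Real.pi) * ((1/Real.pi) * (∫ v in Set.Ioi (0:ℝ), f₀ ((1/Real.cosh v)^2)) + 1/2)
      = (1/Real.pi) * (1 - 2/Real.pi) := by
  have hI : (∫ v in Set.Ioi (0:ℝ), f₀ ((1/Real.cosh v)^2)) = Real.pi/2 - 2 := by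
    rw [← key_integral]
    apply MeasureTheory.setIntegral_congr_fun measurableSet_Ioi
    intro v _
    have hmem : (1/Real.cosh v)^2 ∈ Set.Icc (0:ℝ) 1 := by
      constructor
      · positivity
      · have h1 : 1/Real.cosh v ≤ 1 := by
          rw [div_le_one (Real.cosh_pos v)]; exact Real.one_le_cosh v
        exact pow_le_one₀ (by positivity) h1
    show f₀ ((1/Real.cosh v)^2) = gfun v
    rw [hf₀ _ hmem]
    rfl
  rw [hI]
  have hπ := Real.pi_ne_zero
  field_simp
  ring
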